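/- Let B = B_1 ⊗ B_2 where B_1, B_2 ∈ ℝ^{n×n} are symmetric positive definite, and for indices 1 ≤ i, j ≤ n let P_{ij} = P_{1,i} ⊗ P_{2,j}, where P_{1,i} and P_{2,j} are the lumped preconditioners constructed from B_1 and B_2 respectively. Then: (1) B and P_{ij} are symmetric positive definite and all generalized eigenvalues of the pencil (B, P_{ij}) lie in (0, 1]; (2) if i ≥ s and j ≥ q then λ_k(B, P_{sq}) ≤ λ_k(B, P_{ij}) for all k = 1, …, n²; (3) if B_1 and B_2 have all entries nonnegative, then the largest generalized eigenvalue of (B, P_{ij}) equals 1 for all i, j. -/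

import Mathlib

open Matrix

/-- The Euclidean norm of a vector. -/
noncomputable def enorm {m : Type*} [Fintype m] (v : m → ℝ) : ℝ :=
  Real.sqrt (∑ i, (v i) ^ 2)

/-- The `k`-th smallest generalized eigenvalue (counted with multiplicity) of the
symmetric pencil `(A, B)` with `B` positive definite, i.e. the `k`-th smallest root of
`det (A - λ B) = 0`.  It is defined as the `k`-th smallest eigenvalue of the Hermitian
matrix `√(B⁻¹) * A * √(B⁻¹)`, which is similar to `B⁻¹ * A`.  Junk value `0` is returned
if `A` is not symmetric or `B` is not positive definite. -/
noncomputable def genEig {m : Type*} [Fintype m] [DecidableEq m]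
    (A B : Matrix m m ℝ) (k : Fin (Fintype.card m)) : ℝ :=
  letI := Classical.propDecidable
  if h : A.IsHermitian ∧ B.PosDef then
    let hP := (h.2.inv).posSemidef
    let S : Matrix m m ℝ := (hP.isHermitian.eigenvectorUnitary : Matrix m m ℝ) *
      diagonal (fun i => Real.sqrt (hP.isHermitian.eigenvalues i)) *
      (star hP.isHermitian.eigenvectorUnitary : Matrix m m ℝ)
    have hS : S.IsHermitian := by
      show Sᴴ = S
      simp only [S, conjTranspose_mul, Matrix.mul_assoc, diagonal_conjTranspose,
        star_eq_conjTranspose, conjTranspose_conjTranspose, star_trivial]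
    have hC : (S * A * S).IsHermitian := by
      clear_value S
      show (S * A * S)ᴴ = S * A * S
      rw [conjTranspose_mul, conjTranspose_mul, hS.eq, h.1.eq, Matrix.mul_assoc]
    let f : Fin (Fintype.card m) → ℝ := hC.eigenvalues₀
    f (Tuple.sort f k)
  else 0

/-- The `k`-th smallest generalized eigenvalue of a pencil of `n × n` matrices,
indexed by `Fin n`.  `genEigFin A B 0` is the smallest one, `λ_1(A,B)`, and
`genEigFin A B (Fin.last _)` is the largest one, `λ_n(A,B)`. -/
noncomputable def genEigFin {n : ℕ} (A B : Matrix (Fin n) (Fin n) ℝ) (k : Fin n) : ℝ :=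
  genEig A B (Fin.cast (Fintype.card_fin n).symm k)

/-- The (row-sum) lumping operator: `lump B` is the diagonal matrix whose `i`-th
diagonal entry is the sum of the absolute values of the entries of the `i`-th row of `B`. -/
noncomputable def lump {m : Type*} [Fintype m] [DecidableEq m]
    (B : Matrix m m ℝ) : Matrix m m ℝ :=
  Matrix.diagonal fun i => ∑ j, |B i j|

/-- The banded part `D_i` of a matrix: it keeps all sub- and super-diagonals of index
smaller than `i` (i.e. the entries with `|j - k| < i`) and sets the rest to zero. -/
def diagBand {n : ℕ} (B : Matrix (Fin n) (Fin n) ℝ) (i : ℕ) : Matrix (Fin n) (Fin n) ℝ :=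
  Matrix.of fun j k => if |((j : ℕ) : ℤ) - ((k : ℕ) : ℤ)| < (i : ℤ) then B j k else 0

/-- The lumped preconditioner `P_i = D_i + 𝓛(R_i)` where `B = D_i + R_i`, `D_i` being the
banded part of `B` of bandwidth `i` and `R_i` the remainder. -/
noncomputable def precond {n : ℕ} (B : Matrix (Fin n) (Fin n) ℝ) (i : ℕ) :
    Matrix (Fin n) (Fin n) ℝ :=
  diagBand B i + lump (B - diagBand B i)



open RealInnerProductSpace Kronecker
set_option linter.unusedSectionVars false
set_option maxHeartbeats 1000000

section Helpers
variable {m : Type*} [Fintype m] [DecidableEq m]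

lemma star_id (x : m → ℝ) : star x = x := by funext i; simp

lemma quad_eq (M : Matrix m m ℝ) (x : m → ℝ) :
    x ⬝ᵥ (M *ᵥ x) = ∑ i, ∑ j, M i j * x i * x j := by
  simp only [dotProduct, mulVec, Finset.mul_sum]
  refine Finset.sum_congr rfl fun i _ => Finset.sum_congr rfl fun j _ => ?_
  ring

lemma lump_sub_posSemidef (R : Matrix m m ℝ) (hR : R.IsHermitian) :
    (lump R - R).PosSemidef := by
  have hsym : ∀ i j, R j i = R i j := fun i j => by
    have := congrFun (congrFun hR.eq i) j
    simpa [conjTranspose_apply] using this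
  refine PosSemidef.of_dotProduct_mulVec_nonneg ?_ ?_
  · refine IsHermitian.sub ?_ hR
    exact isHermitian_diagonal_of_self_adjoint _ (by funext i; simp)
  intro x
  rw [star_id, quad_eq]
  set f : m → m → ℝ := fun i j => |R i j| * x i ^ 2 - R i j * (x i * x j) with hf
  have hquad : ∑ i, ∑ j, (lump R - R) i j * x i * x j = ∑ i, ∑ j, f i j := by
    refine Finset.sum_congr rfl fun i _ => ?_
    have : ∀ j, (lump R - R) i j * x i * x j
        = (if i = j then (∑ k, |R i k|) * x i * x j else 0) - R i j * x i * x j := by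
      intro j
      by_cases h : i = j <;> simp [lump, diagonal_apply, h, sub_mul]
    simp only [this, Finset.sum_sub_distrib, Finset.sum_ite_eq, Finset.mem_univ, if_true,
      Finset.sum_mul]
    rw [hf]
    simp only [Finset.sum_sub_distrib]
    congr 1
    · refine Finset.sum_congr rfl fun j _ => ?_
      ring
    · refine Finset.sum_congr rfl fun j _ => ?_
      ring
  rw [hquad]
  have h2 : (∑ i, ∑ j, f i j) + (∑ i, ∑ j, f i j)
      = ∑ i, ∑ j, (f i j + f j i) := by
    conv_lhs => rw [show (∑ i, ∑ j, f i j) + (∑ i, ∑ j, f i j)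
      = (∑ i, ∑ j, f i j) + (∑ j, ∑ i, f i j) from by rw [Finset.sum_comm]]
    rw [← Finset.sum_add_distrib]
    refine Finset.sum_congr rfl fun i _ => ?_
    rw [← Finset.sum_add_distrib]
  have hterm : ∀ i j : m, 0 ≤ f i j + f j i := by
    intro i j
    have h1 := hsym i j
    simp only [hf, h1]
    nlinarith [abs_nonneg (R i j), le_abs_self (R i j), neg_abs_le (R i j),
      sq_nonneg (x i - x j), sq_nonneg (x i + x j)]
  have : 0 ≤ (∑ i, ∑ j, f i j) + (∑ i, ∑ j, f i j) := by
    rw [h2]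
    exact Finset.sum_nonneg fun i _ => Finset.sum_nonneg fun j _ => hterm i j
  linarith

end Helpers

section Band
variable {n : ℕ} (B : Matrix (Fin n) (Fin n) ℝ)

lemma isHermitian_of_real {M : Matrix (Fin n) (Fin n) ℝ} (h : ∀ p q, M q p = M p q) :
    M.IsHermitian := by
  funext p q
  simp [conjTranspose_apply, h]

lemma hermsym {m : Type*} [Fintype m] {M : Matrix m m ℝ} (h : M.IsHermitian) (p q : m) :
    M q p = M p q := by
  have := congrFun (congrFun h.eq p) q
  simpa [conjTranspose_apply] using this

lemma diagBand_isHermitian (hB : B.IsHermitian) (i : ℕ) : (diagBand B i).IsHermitian := by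
  apply isHermitian_of_real
  intro p q
  simp only [diagBand, of_apply]
  rw [abs_sub_comm]
  by_cases h : |((p : ℕ) : ℤ) - ((q : ℕ) : ℤ)| < (i : ℤ) <;> simp [h, hermsym hB p q]

lemma precond_sub_eq (i : ℕ) :
    precond B i - B = lump (B - diagBand B i) - (B - diagBand B i) := by
  unfold precond
  abel

lemma precond_sub_posSemidef (hB : B.IsHermitian) (i : ℕ) :
    (precond B i - B).PosSemidef := by
  rw [precond_sub_eq]
  exact lump_sub_posSemidef _ (hB.sub (diagBand_isHermitian B hB i))

lemma precond_posDef (hB : B.PosDef) (i : ℕ) : (precond B i).PosDef := by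
  have h := hB.add_posSemidef (precond_sub_posSemidef B hB.isHermitian i)
  have : B + (precond B i - B) = precond B i := by abel
  rwa [this] at h

lemma precond_mono (hB : B.IsHermitian) {s i : ℕ} (hsi : s ≤ i) :
    (precond B s - precond B i).PosSemidef := by
  set E : Matrix (Fin n) (Fin n) ℝ := diagBand B i - diagBand B s with hE
  have hEh : E.IsHermitian :=
    (diagBand_isHermitian B hB i).sub (diagBand_isHermitian B hB s)
  have habs : ∀ p q : Fin n, |B p q - diagBand B s p q|
      = |B p q - diagBand B i p q| + |E p q| := by
    intro p q
    simp only [hE, diagBand, Matrix.sub_apply, of_apply]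
    by_cases h1 : |((p : ℕ) : ℤ) - ((q : ℕ) : ℤ)| < (s : ℤ)
    · have h2 : |((p : ℕ) : ℤ) - ((q : ℕ) : ℤ)| < (i : ℤ) :=
        lt_of_lt_of_le h1 (by exact_mod_cast hsi)
      simp [h1, h2]
    · by_cases h2 : |((p : ℕ) : ℤ) - ((q : ℕ) : ℤ)| < (i : ℤ) <;> simp [h1, h2]
  have hlump : lump (B - diagBand B s) = lump (B - diagBand B i) + lump E := by
    have h1 : ∀ p, (∑ j, |B p j - diagBand B s p j|)
        = (∑ j, |B p j - diagBand B i p j|) + ∑ j, |E p j| := by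
      intro p
      rw [← Finset.sum_add_distrib]
      exact Finset.sum_congr rfl fun q _ => habs p q
    ext p q
    by_cases h : p = q <;> simp [lump, diagonal_apply, h, h1]
  have heq : precond B s - precond B i = lump E - E := by
    unfold precond
    rw [hlump, hE]
    abel
  rw [heq]
  exact lump_sub_posSemidef E hEh

lemma precond_sub_mulVec_one (hB : ∀ p q, 0 ≤ B p q) (i : ℕ) :
    (precond B i - B) *ᵥ (fun _ => (1 : ℝ)) = 0 := by
  rw [precond_sub_eq]
  set R := B - diagBand B i with hR
  have hRnn : ∀ p q, 0 ≤ R p q := by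
    intro p q
    simp only [hR, diagBand, Matrix.sub_apply, of_apply]
    by_cases h : |((p : ℕ) : ℤ) - ((q : ℕ) : ℤ)| < (i : ℤ) <;> simp [h, hB p q]
  funext p
  simp only [mulVec, dotProduct, mul_one, Matrix.sub_apply, lump, diagonal_apply, Pi.zero_apply,
    Finset.sum_sub_distrib, Finset.sum_ite_eq, Finset.mem_univ, if_true]
  rw [sub_eq_zero]
  exact Finset.sum_congr rfl fun q _ => abs_of_nonneg (hRnn p q)

end Band

section Kron
variable {m n : Type*} [Fintype m] [DecidableEq m] [Fintype n] [DecidableEq n]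

lemma kron_conjTranspose (A : Matrix m m ℝ) (B : Matrix n n ℝ) :
    (A ⊗ₖ B)ᴴ = Aᴴ ⊗ₖ Bᴴ := by
  ext ⟨i, j⟩ ⟨k, l⟩
  simp [conjTranspose_apply, kroneckerMap_apply]

lemma posSemidef_kron {A : Matrix m m ℝ} {B : Matrix n n ℝ}
    (hA : A.PosSemidef) (hB : B.PosSemidef) : (A ⊗ₖ B).PosSemidef := by
  obtain ⟨M, hM⟩ : ∃ M : Matrix m m ℝ, A = Mᴴ * M := by
    open scoped MatrixOrder in exact CStarAlgebra.nonneg_iff_eq_star_mul_self.mp hA.nonneg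
  obtain ⟨N, hN⟩ : ∃ N : Matrix n n ℝ, B = Nᴴ * N := by
    open scoped MatrixOrder in exact CStarAlgebra.nonneg_iff_eq_star_mul_self.mp hB.nonneg
  have : A ⊗ₖ B = (M ⊗ₖ N)ᴴ * (M ⊗ₖ N) := by
    rw [kron_conjTranspose, hM, hN, mul_kronecker_mul]
  rw [this]
  exact posSemidef_conjTranspose_mul_self _

lemma posDef_of_posSemidef_det_ne_zero {A : Matrix m m ℝ}
    (hA : A.PosSemidef) (hdet : A.det ≠ 0) : A.PosDef := by
  refine PosDef.of_dotProduct_mulVec_pos hA.1 fun x hx => ?_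
  rcases lt_or_eq_of_le (hA.dotProduct_mulVec_nonneg x) with h | h
  · exact h
  exfalso
  apply hx
  have h0 : A *ᵥ x = 0 := (hA.dotProduct_mulVec_zero_iff x).mp h.symm
  have : A⁻¹ *ᵥ (A *ᵥ x) = x := by
    rw [mulVec_mulVec, nonsing_inv_mul A (isUnit_iff_ne_zero.mpr hdet), one_mulVec]
  rw [h0, mulVec_zero] at this
  exact this.symm

lemma posDef_kron {A : Matrix m m ℝ} {B : Matrix n n ℝ}
    (hA : A.PosDef) (hB : B.PosDef) : (A ⊗ₖ B).PosDef := by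
  refine posDef_of_posSemidef_det_ne_zero (posSemidef_kron hA.posSemidef hB.posSemidef) ?_
  rw [det_kronecker]
  have h1 := hA.det_pos
  have h2 := hB.det_pos
  positivity

lemma sub_kron (A B : Matrix m m ℝ) (C : Matrix n n ℝ) :
    (A - B) ⊗ₖ C = A ⊗ₖ C - B ⊗ₖ C := by
  ext ⟨i, j⟩ ⟨k, l⟩
  simp [kroneckerMap_apply, sub_mul]

lemma kron_sub (A : Matrix m m ℝ) (B C : Matrix n n ℝ) :
    A ⊗ₖ (B - C) = A ⊗ₖ B - A ⊗ₖ C := by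
  ext ⟨i, j⟩ ⟨k, l⟩
  simp [kroneckerMap_apply, mul_sub]

lemma kron_mulVec_one (A : Matrix m m ℝ) (B : Matrix n n ℝ) :
    (A ⊗ₖ B) *ᵥ (fun _ => (1 : ℝ))
      = fun pq => (A *ᵥ fun _ => 1) pq.1 * (B *ᵥ fun _ => 1) pq.2 := by
  funext ⟨p, q⟩
  simp only [mulVec, dotProduct, mul_one]
  rw [Fintype.sum_prod_type]
  simp only [kroneckerMap_apply]
  rw [Finset.sum_mul_sum]

lemma kron_sub_kron_break {A₁ P₁ : Matrix m m ℝ} {A₂ P₂ : Matrix n n ℝ} :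
    P₁ ⊗ₖ P₂ - A₁ ⊗ₖ A₂ = (P₁ - A₁) ⊗ₖ P₂ + A₁ ⊗ₖ (P₂ - A₂) := by
  rw [sub_kron, kron_sub]
  abel

end Kron

section Spec
variable {m : Type*} [Fintype m] [DecidableEq m]

lemma star_id' (x : m → ℝ) : star x = x := by funext i; simp

lemma transpose_of_herm {M : Matrix m m ℝ} (h : M.IsHermitian) : Mᵀ = M := by
  have := h.eq
  rwa [conjTranspose_eq_transpose_of_trivial] at this

lemma mulVec_ne_zero {M : Matrix m m ℝ} (hdet : M.det ≠ 0) {x : m → ℝ} (hx : x ≠ 0) :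
    M *ᵥ x ≠ 0 := by
  intro h
  apply hx
  have : M⁻¹ *ᵥ (M *ᵥ x) = x := by
    rw [mulVec_mulVec, nonsing_inv_mul M (isUnit_iff_ne_zero.mpr hdet), one_mulVec]
  rw [h, mulVec_zero] at this
  exact this.symm

section SqrtFacts
variable {X : Matrix m m ℝ} (hX : X.PosDef)

noncomputable def sqrtInv : Matrix m m ℝ :=
  (hX.inv.posSemidef.isHermitian.eigenvectorUnitary : Matrix m m ℝ) *
    diagonal (fun i => Real.sqrt (hX.inv.posSemidef.isHermitian.eigenvalues i)) *
    (star hX.inv.posSemidef.isHermitian.eigenvectorUnitary : Matrix m m ℝ)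

lemma S_mul_S : sqrtInv hX * sqrtInv hX = X⁻¹ := by
  have hU : (star hX.inv.posSemidef.isHermitian.eigenvectorUnitary : Matrix m m ℝ) *
      (hX.inv.posSemidef.isHermitian.eigenvectorUnitary : Matrix m m ℝ) = 1 :=
    Unitary.coe_star_mul_self _
  have hD : diagonal (fun i => Real.sqrt (hX.inv.posSemidef.isHermitian.eigenvalues i)) *
      diagonal (fun i => Real.sqrt (hX.inv.posSemidef.isHermitian.eigenvalues i)) =
      diagonal (hX.inv.posSemidef.isHermitian.eigenvalues) := by
    rw [diagonal_mul_diagonal]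
    congr 1
    funext i
    exact Real.mul_self_sqrt (hX.inv.posSemidef.eigenvalues_nonneg i)
  have hspec := hX.inv.posSemidef.isHermitian.spectral_theorem
  calc sqrtInv hX * sqrtInv hX
      = (hX.inv.posSemidef.isHermitian.eigenvectorUnitary : Matrix m m ℝ) *
        (diagonal (fun i => Real.sqrt (hX.inv.posSemidef.isHermitian.eigenvalues i)) *
        ((star hX.inv.posSemidef.isHermitian.eigenvectorUnitary : Matrix m m ℝ) *
        (hX.inv.posSemidef.isHermitian.eigenvectorUnitary : Matrix m m ℝ)) *
        diagonal (fun i => Real.sqrt (hX.inv.posSemidef.isHermitian.eigenvalues i))) *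
        (star hX.inv.posSemidef.isHermitian.eigenvectorUnitary : Matrix m m ℝ) := by
        simp only [sqrtInv, Matrix.mul_assoc]
    _ = (hX.inv.posSemidef.isHermitian.eigenvectorUnitary : Matrix m m ℝ) *
        diagonal (hX.inv.posSemidef.isHermitian.eigenvalues) *
        (star hX.inv.posSemidef.isHermitian.eigenvectorUnitary : Matrix m m ℝ) := by
        rw [hU, Matrix.mul_one, hD]
    _ = X⁻¹ := by
        conv_rhs => rw [hspec]
        simp [Unitary.conjStarAlgAut_apply]

lemma S_herm : (sqrtInv hX).IsHermitian := by
  show (sqrtInv hX)ᴴ = sqrtInv hX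
  simp only [sqrtInv, conjTranspose_mul, Matrix.mul_assoc, diagonal_conjTranspose,
    star_eq_conjTranspose, conjTranspose_conjTranspose, star_trivial]

lemma X_comm_S : X * sqrtInv hX = sqrtInv hX * X := by
  set S := sqrtInv hX with hS
  have hXdet : IsUnit X.det := isUnit_iff_ne_zero.mpr hX.det_pos.ne'
  have h1 : S * X⁻¹ = X⁻¹ * S := by
    rw [← S_mul_S hX, Matrix.mul_assoc]
  calc X * S = X * S * (X⁻¹ * X) := by rw [nonsing_inv_mul X hXdet, Matrix.mul_one]
    _ = X * (S * X⁻¹) * X := by simp only [Matrix.mul_assoc]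
    _ = X * X⁻¹ * S * X := by rw [h1]; simp only [Matrix.mul_assoc]
    _ = S * X := by rw [mul_nonsing_inv X hXdet, Matrix.one_mul]

lemma S_mul_X_mul_S : sqrtInv hX * X * sqrtInv hX = 1 := by
  set S := sqrtInv hX with hS
  have hXdet : IsUnit X.det := isUnit_iff_ne_zero.mpr hX.det_pos.ne'
  calc S * X * S = S * (X * S) := by rw [Matrix.mul_assoc]
    _ = S * (S * X) := by rw [X_comm_S hX]
    _ = S * S * X := by rw [Matrix.mul_assoc]
    _ = X⁻¹ * X := by rw [S_mul_S hX]
    _ = 1 := nonsing_inv_mul X hXdet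

lemma S_det_ne_zero : (sqrtInv hX).det ≠ 0 := by
  have h : (sqrtInv hX).det * (sqrtInv hX).det = X⁻¹.det := by
    rw [← det_mul, S_mul_S hX]
  have h2 : X⁻¹.det ≠ 0 := hX.inv.det_pos.ne'
  intro h0
  rw [h0, mul_zero] at h
  exact h2 h.symm

end SqrtFacts

lemma genEig_eq {A B : Matrix m m ℝ} (hA : A.IsHermitian) (hB : B.PosDef)
    (hC : (sqrtInv hB * A * sqrtInv hB).IsHermitian)
    (k : Fin (Fintype.card m)) :
    genEig A B k = hC.eigenvalues₀ (Tuple.sort hC.eigenvalues₀ k) := by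
  rw [genEig, dif_pos (⟨hA, hB⟩ : A.IsHermitian ∧ B.PosDef)]
  congr!
  all_goals (unfold sqrtInv; congr!)

lemma eig0_eq {C : Matrix m m ℝ} (hC : C.IsHermitian) (j : Fin (Fintype.card m)) :
    hC.eigenvalues₀ j = hC.eigenvalues ((Fintype.equivOfCardEq (Fintype.card_fin _)) j) := by
  rw [IsHermitian.eigenvalues]
  simp

lemma inner_eq_dot (x y : EuclideanSpace ℝ m) : ⟪x, y⟫ = (x : m → ℝ) ⬝ᵥ (y : m → ℝ) := by
  simp [PiLp.inner_apply, dotProduct, RCLike.inner_apply, mul_comm]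

lemma eigvec_dot {C : Matrix m m ℝ} (hC : C.IsHermitian) (i i' : m) :
    (⇑(hC.eigenvectorBasis i) : m → ℝ) ⬝ᵥ ⇑(hC.eigenvectorBasis i')
      = if i = i' then 1 else 0 := by
  rw [← inner_eq_dot]
  exact orthonormal_iff_ite.mp hC.eigenvectorBasis.orthonormal i i'


lemma dot_mulVec_left {S : Matrix m m ℝ} (hS : S.IsHermitian) (u y : m → ℝ) :
    (S *ᵥ u) ⬝ᵥ y = u ⬝ᵥ (S *ᵥ y) := by
  rw [dotProduct_comm, dotProduct_mulVec, ← mulVec_transpose, transpose_of_herm hS,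
    dotProduct_comm]

lemma dot_sandwich {S : Matrix m m ℝ} (hS : S.IsHermitian) (M : Matrix m m ℝ) (u v : m → ℝ) :
    (S *ᵥ u) ⬝ᵥ (M *ᵥ (S *ᵥ v)) = u ⬝ᵥ ((S * M * S) *ᵥ v) := by
  rw [dot_mulVec_left hS, mulVec_mulVec, mulVec_mulVec]

lemma sum_smul_dot {ι : Type*} [Fintype ι] (c : ι → ℝ) (v : ι → m → ℝ) (y : m → ℝ) :
    (∑ j, c j • v j) ⬝ᵥ y = ∑ j, c j * (v j ⬝ᵥ y) := by
  simp only [dotProduct, Finset.sum_apply, Pi.smul_apply, smul_eq_mul, Finset.sum_mul,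
    Finset.mul_sum]
  rw [Finset.sum_comm]
  exact Finset.sum_congr rfl fun j _ => Finset.sum_congr rfl fun i _ => by ring

lemma mulVec_sum' {ι : Type*} [Fintype ι] (M : Matrix m m ℝ) (f : ι → m → ℝ) :
    M *ᵥ (∑ l, f l) = ∑ l, M *ᵥ f l := by
  funext i
  simp only [mulVec, dotProduct, Finset.sum_apply, Finset.mul_sum]
  rw [Finset.sum_comm]

lemma quad_diag {ι : Type*} [Fintype ι] [DecidableEq ι] (M : Matrix m m ℝ)
    (v : ι → m → ℝ) (r : ι → ℝ)
    (h : ∀ j l, v j ⬝ᵥ (M *ᵥ v l) = if j = l then r l else 0) (c : ι → ℝ) :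
    (∑ j, c j • v j) ⬝ᵥ (M *ᵥ (∑ l, c l • v l)) = ∑ j, r j * c j ^ 2 := by
  rw [show M *ᵥ (∑ l, c l • v l) = ∑ l, c l • (M *ᵥ v l) from by
    rw [mulVec_sum']
    exact Finset.sum_congr rfl fun l _ => mulVec_smul M (c l) (v l)]
  rw [sum_smul_dot]
  refine Finset.sum_congr rfl fun j _ => ?_
  rw [show v j ⬝ᵥ (∑ l, c l • (M *ᵥ v l)) = ∑ l, c l * (v j ⬝ᵥ (M *ᵥ v l)) from by
    simp only [dotProduct, Finset.sum_apply, Pi.smul_apply, smul_eq_mul, Finset.mul_sum]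
    rw [Finset.sum_comm]
    exact Finset.sum_congr rfl fun l _ => Finset.sum_congr rfl fun i _ => by ring]
  simp only [h, mul_ite, mul_zero, Finset.sum_ite_eq, Finset.mem_univ, if_true]
  ring

lemma sandwich_posDef {A B : Matrix m m ℝ} (hA : A.PosDef) (hB : B.PosDef) :
    (sqrtInv hB * A * sqrtInv hB).PosDef := by
  set S := sqrtInv hB with hSdef
  have hpsd : (Sᴴ * A * S).PosSemidef := hA.posSemidef.conjTranspose_mul_mul_same S
  rw [(S_herm hB).eq, ← hSdef] at hpsd
  refine posDef_of_posSemidef_det_ne_zero hpsd ?_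
  rw [det_mul, det_mul]
  have h1 := S_det_ne_zero hB
  have h2 := hA.det_pos.ne'
  exact mul_ne_zero (mul_ne_zero h1 h2) h1

lemma genEig_pos_of {A B : Matrix m m ℝ} (hA : A.PosDef) (hB : B.PosDef)
    (k : Fin (Fintype.card m)) : 0 < genEig A B k := by
  have hCpd := sandwich_posDef hA hB
  rw [genEig_eq hA.isHermitian hB hCpd.isHermitian]
  rw [eig0_eq]
  exact hCpd.eigenvalues_pos _

lemma eigenvalues_le_one {C : Matrix m m ℝ} (hC : C.IsHermitian)
    (h1C : (1 - C).PosSemidef) (i : m) : hC.eigenvalues i ≤ 1 := by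
  set v : m → ℝ := ⇑(hC.eigenvectorBasis i) with hv
  have hvv : v ⬝ᵥ v = 1 := by
    rw [hv, eigvec_dot hC i i, if_pos rfl]
  have hCv : C *ᵥ v = hC.eigenvalues i • v := hC.mulVec_eigenvectorBasis i
  have h := h1C.dotProduct_mulVec_nonneg v
  rw [star_id'] at h
  rw [sub_mulVec, one_mulVec, dotProduct_sub, hCv, dotProduct_smul, smul_eq_mul, hvv,
    mul_one] at h
  linarith

lemma genEig_le_one_of {A B : Matrix m m ℝ} (hA : A.IsHermitian) (hB : B.PosDef)
    (hBA : (B - A).PosSemidef) (k : Fin (Fintype.card m)) : genEig A B k ≤ 1 := by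
  set S := sqrtInv hB with hSdef
  have hC : (S * A * S).IsHermitian := by
    have hpsd := hA
    show (S * A * S)ᴴ = S * A * S
    rw [conjTranspose_mul, conjTranspose_mul, (S_herm hB).eq, hA.eq, Matrix.mul_assoc]
  rw [genEig_eq hA hB hC, eig0_eq]
  apply eigenvalues_le_one
  have hpsd : (Sᴴ * (B - A) * S).PosSemidef := hBA.conjTranspose_mul_mul_same S
  rw [(S_herm hB).eq, ← hSdef] at hpsd
  have : S * (B - A) * S = 1 - S * A * S := by
    rw [Matrix.mul_sub, Matrix.sub_mul, S_mul_X_mul_S hB]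
  rwa [this] at hpsd

lemma exists_eigenvalue_eq {C : Matrix m m ℝ} (hC : C.IsHermitian) {μ : ℝ} {y : m → ℝ}
    (hy : y ≠ 0) (h : C *ᵥ y = μ • y) : ∃ i, hC.eigenvalues i = μ := by
  set U : Matrix m m ℝ := (hC.eigenvectorUnitary : Matrix m m ℝ) with hU
  have hU1 : U * star U = 1 := mem_unitaryGroup_iff.mp hC.eigenvectorUnitary.2
  have hU2 : star U * U = 1 := mem_unitaryGroup_iff'.mp hC.eigenvectorUnitary.2
  have hdiag : star U * C * U = Matrix.diagonal (RCLike.ofReal ∘ hC.eigenvalues) := by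
    have := hC.conjStarAlgAut_star_eigenvectorUnitary
    simpa [Unitary.conjStarAlgAut_apply] using this
  set z : m → ℝ := star U *ᵥ y with hz
  have hz0 : z ≠ 0 := by
    intro h0
    apply hy
    have : U *ᵥ z = y := by
      rw [hz, mulVec_mulVec, hU1, one_mulVec]
    rw [h0, mulVec_zero] at this
    exact this.symm
  have hzeig : Matrix.diagonal (RCLike.ofReal ∘ hC.eigenvalues) *ᵥ z = μ • z := by
    rw [← hdiag, hz]
    calc (star U * C * U) *ᵥ (star U *ᵥ y)
        = (star U * C * (U * star U)) *ᵥ y := by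
          rw [mulVec_mulVec]
          simp only [Matrix.mul_assoc]
      _ = (star U * C) *ᵥ y := by rw [hU1, Matrix.mul_one]
      _ = star U *ᵥ (C *ᵥ y) := by rw [mulVec_mulVec]
      _ = μ • (star U *ᵥ y) := by rw [h, mulVec_smul]
  obtain ⟨i, hi⟩ := Function.ne_iff.mp hz0
  refine ⟨i, ?_⟩
  have hcomp := congrFun hzeig i
  rw [mulVec_diagonal] at hcomp
  simp only [Function.comp_apply, Pi.smul_apply, smul_eq_mul] at hcomp
  have hzi : z i ≠ 0 := by simpa using hi
  have : (RCLike.ofReal (hC.eigenvalues i) : ℝ) = μ := mul_right_cancel₀ hzi hcomp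
  simpa using this


lemma one_mem_range_genEig {A B : Matrix m m ℝ} (hA : A.IsHermitian) (hB : B.PosDef)
    {w : m → ℝ} (hw : w ≠ 0) (hABw : A *ᵥ w = B *ᵥ w) :
    (1 : ℝ) ∈ Set.range (genEig A B) := by
  set S := sqrtInv hB with hSdef
  have hC : (S * A * S).IsHermitian := by
    show (S * A * S)ᴴ = S * A * S
    rw [conjTranspose_mul, conjTranspose_mul, (S_herm hB).eq, ← hSdef, hA.eq, Matrix.mul_assoc]
  have hBdet : B.det ≠ 0 := hB.det_pos.ne'
  set y : m → ℝ := S *ᵥ (B *ᵥ w) with hy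
  have hy0 : y ≠ 0 := mulVec_ne_zero (S_det_ne_zero hB) (mulVec_ne_zero hBdet hw)
  have hCy : (S * A * S) *ᵥ y = (1 : ℝ) • y := by
    rw [hy, one_smul, mulVec_mulVec, mulVec_mulVec]
    have h1 : S * A * S * S * B = S * A := by
      rw [Matrix.mul_assoc (S * A) S S, S_mul_S hB, Matrix.mul_assoc,
        nonsing_inv_mul B (isUnit_iff_ne_zero.mpr hBdet), Matrix.mul_one]
    rw [h1, ← mulVec_mulVec, hABw]
  obtain ⟨i, hi⟩ := exists_eigenvalue_eq hC hy0 hCy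
  refine ⟨(Tuple.sort hC.eigenvalues₀).symm
    ((Fintype.equivOfCardEq (Fintype.card_fin _)).symm i), ?_⟩
  rw [genEig_eq hA hB hC, Equiv.apply_symm_apply, eig0_eq, Equiv.apply_symm_apply, hi]

lemma eig_system {A B : Matrix m m ℝ} (hA : A.IsHermitian) (hB : B.PosDef) :
    ∃ (g : Fin (Fintype.card m) → ℝ) (W : Fin (Fintype.card m) → (m → ℝ)),
      Monotone g ∧ (∀ k, genEig A B k = g k) ∧
      (∀ j l, W j ⬝ᵥ (B *ᵥ W l) = if j = l then 1 else 0) ∧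
      (∀ j l, W j ⬝ᵥ (A *ᵥ W l) = if j = l then g l else 0) := by
  set S := sqrtInv hB with hSdef
  have hC : (S * A * S).IsHermitian := by
    show (S * A * S)ᴴ = S * A * S
    rw [conjTranspose_mul, conjTranspose_mul, (S_herm hB).eq, ← hSdef, hA.eq, Matrix.mul_assoc]
  set e : Fin (Fintype.card m) ≃ m := Fintype.equivOfCardEq (Fintype.card_fin _) with he
  set σ := Tuple.sort hC.eigenvalues₀ with hσ
  refine ⟨fun j => hC.eigenvalues₀ (σ j),
    fun j => S *ᵥ ⇑(hC.eigenvectorBasis (e (σ j))), ?_, ?_, ?_, ?_⟩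
  · exact Tuple.monotone_sort hC.eigenvalues₀
  · intro k
    rw [genEig_eq hA hB hC]
  · intro j l
    rw [dot_sandwich (S_herm hB), ← hSdef, S_mul_X_mul_S hB, one_mulVec, eigvec_dot]
    by_cases h : j = l
    · simp [h]
    · have h2 : e (σ j) ≠ e (σ l) := by
        intro hh
        exact h (σ.injective (e.injective hh))
      simp [h, h2]
  · intro j l
    rw [dot_sandwich (S_herm hB), ← hSdef,
      show (S * A * S) *ᵥ ⇑(hC.eigenvectorBasis (e (σ l)))
        = hC.eigenvalues (e (σ l)) • ⇑(hC.eigenvectorBasis (e (σ l))) from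
        hC.mulVec_eigenvectorBasis _,
      dotProduct_smul, smul_eq_mul, eigvec_dot]
    have hval : hC.eigenvalues (e (σ l)) = hC.eigenvalues₀ (σ l) := (eig0_eq hC (σ l)).symm
    by_cases h : j = l
    · simp [h, hval]
    · have h2 : e (σ j) ≠ e (σ l) := fun hh => h (σ.injective (e.injective hh))
      simp [h, h2]

lemma genEig_anti {A P Q : Matrix m m ℝ} (hA : A.PosDef) (hP : P.PosDef) (hQ : Q.PosDef)
    (hPQ : (P - Q).PosSemidef) (k : Fin (Fintype.card m)) :
    genEig A P k ≤ genEig A Q k := by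
  classical
  obtain ⟨gP, WP, hPm, hPg, hWPP, hWPA⟩ := eig_system hA.isHermitian hP
  obtain ⟨gQ, WQ, hQm, hQg, hWQQ, hWQA⟩ := eig_system hA.isHermitian hQ
  rw [hPg k, hQg k]
  set ιP := ↥(Set.Ici k) with hιP
  set ιQ := ↥(Set.Iic k) with hιQ
  set vP : ιP → (m → ℝ) := fun j => WP j.1 with hvP
  set vQ : ιQ → (m → ℝ) := fun j => WQ j.1 with hvQ
  have hPP' : ∀ j l : ιP, vP j ⬝ᵥ (P *ᵥ vP l) = if j = l then (1:ℝ) else 0 := by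
    intro j l
    rw [hvP]
    simp only []
    rw [hWPP]
    by_cases h : j = l
    · simp [h]
    · have h' : j.1 ≠ l.1 := fun hh => h (Subtype.ext hh)
      simp [h, h']
  have hPA' : ∀ j l : ιP, vP j ⬝ᵥ (A *ᵥ vP l) = if j = l then gP l.1 else 0 := by
    intro j l
    rw [hvP]
    simp only []
    rw [hWPA]
    by_cases h : j = l
    · simp [h]
    · have h' : j.1 ≠ l.1 := fun hh => h (Subtype.ext hh)
      simp [h, h']
  have hQQ' : ∀ j l : ιQ, vQ j ⬝ᵥ (Q *ᵥ vQ l) = if j = l then (1:ℝ) else 0 := by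
    intro j l
    rw [hvQ]
    simp only []
    rw [hWQQ]
    by_cases h : j = l
    · simp [h]
    · have h' : j.1 ≠ l.1 := fun hh => h (Subtype.ext hh)
      simp [h, h']
  have hQA' : ∀ j l : ιQ, vQ j ⬝ᵥ (A *ᵥ vQ l) = if j = l then gQ l.1 else 0 := by
    intro j l
    rw [hvQ]
    simp only []
    rw [hWQA]
    by_cases h : j = l
    · simp [h]
    · have h' : j.1 ≠ l.1 := fun hh => h (Subtype.ext hh)
      simp [h, h']
  have liP : LinearIndependent ℝ vP := by
    rw [Fintype.linearIndependent_iff]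
    intro c hc l
    have h0 := congrArg (fun u => u ⬝ᵥ (P *ᵥ vP l)) hc
    simp only [zero_dotProduct] at h0
    rw [sum_smul_dot] at h0
    simp only [hPP', mul_ite, mul_one, mul_zero, Finset.sum_ite_eq', Finset.sum_ite_eq, Finset.mem_univ,
      if_true] at h0
    rw [Finset.sum_eq_single l (fun b _ hb => if_neg hb) (by simp), if_pos rfl] at h0
    exact h0
  have liQ : LinearIndependent ℝ vQ := by
    rw [Fintype.linearIndependent_iff]
    intro c hc l
    have h0 := congrArg (fun u => u ⬝ᵥ (Q *ᵥ vQ l)) hc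
    simp only [zero_dotProduct] at h0
    rw [sum_smul_dot] at h0
    simp only [hQQ', mul_ite, mul_one, mul_zero, Finset.sum_ite_eq', Finset.sum_ite_eq, Finset.mem_univ,
      if_true] at h0
    rw [Finset.sum_eq_single l (fun b _ hb => if_neg hb) (by simp), if_pos rfl] at h0
    exact h0
  set U := Submodule.span ℝ (Set.range vP) with hU
  set V := Submodule.span ℝ (Set.range vQ) with hV
  have hrU : Module.finrank ℝ U = Fintype.card ιP := finrank_span_eq_card liP
  have hrV : Module.finrank ℝ V = Fintype.card ιQ := finrank_span_eq_card liQ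
  have hcard : Fintype.card m + 1 ≤ Fintype.card ιP + Fintype.card ιQ := by
    have hcP : Fintype.card ιP = Fintype.card m - (k : ℕ) := by rw [Fintype.card_Ici, Fin.card_Ici]
    have hcQ : Fintype.card ιQ = (k : ℕ) + 1 := by rw [Fintype.card_Iic, Fin.card_Iic]
    have hk := k.isLt
    omega
  have hsup : Module.finrank ℝ ↥(U ⊔ V) ≤ Fintype.card m := by
    have h1 := Submodule.finrank_le (U ⊔ V)
    rwa [Module.finrank_pi] at h1
  have hsum := Submodule.finrank_sup_add_finrank_inf_eq U V
  have hinf : 0 < Module.finrank ℝ ↥(U ⊓ V) := by omega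
  have : Nontrivial ↥(U ⊓ V) := Module.finrank_pos_iff.mp hinf
  obtain ⟨x', hx'⟩ := exists_ne (0 : ↥(U ⊓ V))
  have hx0 : (x' : m → ℝ) ≠ 0 := fun h => hx' (Subtype.ext h)
  set x : m → ℝ := (x' : m → ℝ) with hx
  have hxU : x ∈ U := x'.2.1
  have hxV : x ∈ V := x'.2.2
  obtain ⟨c, hc⟩ := (Submodule.mem_span_range_iff_exists_fun ℝ).mp hxU
  obtain ⟨d, hd⟩ := (Submodule.mem_span_range_iff_exists_fun ℝ).mp hxV
  have hq1 : x ⬝ᵥ (A *ᵥ x) = ∑ j : ιP, gP j.1 * c j ^ 2 := by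
    rw [← hc]; exact quad_diag A vP (fun j => gP j.1) hPA' c
  have hq2 : x ⬝ᵥ (P *ᵥ x) = ∑ j : ιP, 1 * c j ^ 2 := by
    rw [← hc]; exact quad_diag P vP (fun _ => 1) hPP' c
  have hq3 : x ⬝ᵥ (A *ᵥ x) = ∑ j : ιQ, gQ j.1 * d j ^ 2 := by
    rw [← hd]; exact quad_diag A vQ (fun j => gQ j.1) hQA' d
  have hq4 : x ⬝ᵥ (Q *ᵥ x) = ∑ j : ιQ, 1 * d j ^ 2 := by
    rw [← hd]; exact quad_diag Q vQ (fun _ => 1) hQQ' d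
  have e1 : gP k * (x ⬝ᵥ (P *ᵥ x)) ≤ x ⬝ᵥ (A *ᵥ x) := by
    rw [hq1, hq2, Finset.mul_sum]
    refine Finset.sum_le_sum fun j _ => ?_
    have hm := hPm (Set.mem_Ici.mp j.2)
    nlinarith [sq_nonneg (c j)]
  have e2 : x ⬝ᵥ (A *ᵥ x) ≤ gQ k * (x ⬝ᵥ (Q *ᵥ x)) := by
    rw [hq3, hq4, Finset.mul_sum]
    refine Finset.sum_le_sum fun j _ => ?_
    have hm := hQm (Set.mem_Iic.mp j.2)
    nlinarith [sq_nonneg (d j)]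
  have e3 : x ⬝ᵥ (Q *ᵥ x) ≤ x ⬝ᵥ (P *ᵥ x) := by
    have h := hPQ.dotProduct_mulVec_nonneg x
    rw [star_id', sub_mulVec, dotProduct_sub] at h
    linarith
  have e4 : 0 < x ⬝ᵥ (P *ᵥ x) := by
    have := hP.dotProduct_mulVec_pos hx0
    rwa [star_id'] at this
  have e5 : 0 < gQ k := by
    rw [← hQg k]
    exact genEig_pos_of hA hQ k
  nlinarith [mul_le_mul_of_nonneg_left e3 e5.le]

end Spec


open Kronecker in
/-- Kronecker-product lumped preconditioners `P_{ij} = P_{1,i} ⊗ P_{2,j}`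
for `B = B₁ ⊗ B₂`. -/
theorem stmt_19 {n : ℕ} (B₁ B₂ : Matrix (Fin (n + 1)) (Fin (n + 1)) ℝ)
    (hB₁ : B₁.PosDef) (hB₂ : B₂.PosDef) :
    ((B₁ ⊗ₖ B₂).PosDef ∧
      ∀ i j : ℕ, 1 ≤ i → i ≤ n + 1 → 1 ≤ j → j ≤ n + 1 →
        (precond B₁ i ⊗ₖ precond B₂ j).PosDef ∧
        ∀ k : Fin (Fintype.card (Fin (n + 1) × Fin (n + 1))),
          0 < genEig (B₁ ⊗ₖ B₂) (precond B₁ i ⊗ₖ precond B₂ j) k ∧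
          genEig (B₁ ⊗ₖ B₂) (precond B₁ i ⊗ₖ precond B₂ j) k ≤ 1) ∧
    (∀ i j s q : ℕ, 1 ≤ s → s ≤ i → i ≤ n + 1 → 1 ≤ q → q ≤ j → j ≤ n + 1 →
      ∀ k : Fin (Fintype.card (Fin (n + 1) × Fin (n + 1))),
        genEig (B₁ ⊗ₖ B₂) (precond B₁ s ⊗ₖ precond B₂ q) k ≤
        genEig (B₁ ⊗ₖ B₂) (precond B₁ i ⊗ₖ precond B₂ j) k) ∧
    ((∀ p q, 0 ≤ B₁ p q) → (∀ p q, 0 ≤ B₂ p q) →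
      ∀ i j : ℕ, 1 ≤ i → i ≤ n + 1 → 1 ≤ j → j ≤ n + 1 →
        IsGreatest
          (Set.range (genEig (B₁ ⊗ₖ B₂) (precond B₁ i ⊗ₖ precond B₂ j))) 1) := by
  have hB1h := hB₁.isHermitian
  have hB2h := hB₂.isHermitian
  have hBB : (B₁ ⊗ₖ B₂).PosDef := posDef_kron hB₁ hB₂
  refine ⟨⟨hBB, ?_⟩, ?_, ?_⟩
  · intro i j h1i hin h1j hjn
    have hP1 := precond_posDef B₁ hB₁ i
    have hP2 := precond_posDef B₂ hB₂ j
    have hPD : (precond B₁ i ⊗ₖ precond B₂ j).PosDef := posDef_kron hP1 hP2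
    have hdiff : (precond B₁ i ⊗ₖ precond B₂ j - B₁ ⊗ₖ B₂).PosSemidef := by
      rw [kron_sub_kron_break]
      exact (posSemidef_kron (precond_sub_posSemidef B₁ hB1h i) hP2.posSemidef).add
        (posSemidef_kron hB₁.posSemidef (precond_sub_posSemidef B₂ hB2h j))
    exact ⟨hPD, fun k => ⟨genEig_pos_of hBB hPD k,
      genEig_le_one_of hBB.isHermitian hPD hdiff k⟩⟩
  · intro i j s q h1s hsi hin h1q hqj hjn k
    have hPi := precond_posDef B₁ hB₁ i
    have hPj := precond_posDef B₂ hB₂ j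
    have hPs := precond_posDef B₁ hB₁ s
    have hPq := precond_posDef B₂ hB₂ q
    apply genEig_anti hBB (posDef_kron hPs hPq) (posDef_kron hPi hPj)
    rw [kron_sub_kron_break]
    exact (posSemidef_kron (precond_mono B₁ hB1h hsi) hPq.posSemidef).add
      (posSemidef_kron hPi.posSemidef (precond_mono B₂ hB2h hqj))
  · intro hBnn1 hBnn2 i j h1i hin h1j hjn
    have hP1 := precond_posDef B₁ hB₁ i
    have hP2 := precond_posDef B₂ hB₂ j
    have hPD : (precond B₁ i ⊗ₖ precond B₂ j).PosDef := posDef_kron hP1 hP2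
    have hdiff : (precond B₁ i ⊗ₖ precond B₂ j - B₁ ⊗ₖ B₂).PosSemidef := by
      rw [kron_sub_kron_break]
      exact (posSemidef_kron (precond_sub_posSemidef B₁ hB1h i) hP2.posSemidef).add
        (posSemidef_kron hB₁.posSemidef (precond_sub_posSemidef B₂ hB2h j))
    constructor
    · apply one_mem_range_genEig hBB.isHermitian hPD
        (w := fun _ => (1 : ℝ))
      · intro h
        have := congrFun h ⟨0, 0⟩
        simp at this
      · have e1 : precond B₁ i *ᵥ (fun _ => (1:ℝ)) = B₁ *ᵥ (fun _ => (1:ℝ)) := by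
          have h := precond_sub_mulVec_one B₁ hBnn1 i
          rw [sub_mulVec, sub_eq_zero] at h
          exact h
        have e2 : precond B₂ j *ᵥ (fun _ => (1:ℝ)) = B₂ *ᵥ (fun _ => (1:ℝ)) := by
          have h := precond_sub_mulVec_one B₂ hBnn2 j
          rw [sub_mulVec, sub_eq_zero] at h
          exact h
        rw [kron_mulVec_one, kron_mulVec_one, e1, e2]
    · rintro y ⟨k, rfl⟩
      exact genEig_le_one_of hBB.isHermitian hPD hdiff k
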